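/- If a is a strongly π-regular element of a ring R with aⁿ = aⁿ⁺¹x for some n ∈ ℕ and x ∈ R, then the element w = aⁿxⁿ⁺¹ satisfies aw = wa and aⁿ = aⁿ⁺¹w. -/
import Mathlib

private lemma auxA {R : Type*} [Ring R] (a x : R) (n : ℕ)
    (hx : a ^ n = a ^ (n + 1) * x) : ∀ k, a ^ n = a ^ (n + k) * x ^ k := by
  intro k
  induction k with
  | zero => simp
  | succ k ih =>
    have h1 : a ^ (n + (k + 1)) * x ^ (k + 1) = a ^ k * (a ^ (n + 1) * x) * x ^ k := by
      rw [show n + (k + 1) = k + (n + 1) by omega]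
      simp [pow_add, pow_succ', mul_assoc]
    calc a ^ n = a ^ (n + k) * x ^ k := ih
      _ = a ^ k * a ^ n * x ^ k := by rw [show n + k = k + n by omega, pow_add]
      _ = a ^ k * (a ^ (n + 1) * x) * x ^ k := by rw [← hx]
      _ = a ^ (n + (k + 1)) * x ^ (k + 1) := h1.symm

private lemma auxB {R : Type*} [Ring R] (a y : R) (m : ℕ)
    (hy : a ^ m = y * a ^ (m + 1)) : ∀ k, a ^ m = y ^ k * a ^ (m + k) := by
  intro k
  induction k with
  | zero => simp
  | succ k ih =>
    have h1 : y ^ (k + 1) * a ^ (m + (k + 1)) = y ^ k * (y * a ^ (m + 1)) * a ^ k := by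
      rw [show m + (k + 1) = (m + 1) + k by omega]
      simp [pow_add, pow_succ, mul_assoc]
    calc a ^ m = y ^ k * a ^ (m + k) := ih
      _ = y ^ k * (a ^ m * a ^ k) := by rw [pow_add]
      _ = y ^ k * (y * a ^ (m + 1)) * a ^ k := by rw [hy, ← mul_assoc]
      _ = y ^ (k + 1) * a ^ (m + (k + 1)) := h1.symm

/-- Drazin: if `a` is strongly π-regular in `R` with `a^n = a^(n+1) * x`, then
`w = a^n * x^(n+1)` commutes with `a` and `a^n = a^(n+1) * w`. -/
theorem stmt_0 {R : Type*} [Ring R] (a x : R) (n : ℕ) (hn : 0 < n)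
    (hx : a ^ n = a ^ (n + 1) * x)
    (hleft : ∃ (m : ℕ) (y : R), 0 < m ∧ a ^ m = y * a ^ (m + 1)) :
    a * (a ^ n * x ^ (n + 1)) = (a ^ n * x ^ (n + 1)) * a ∧
      a ^ n = a ^ (n + 1) * (a ^ n * x ^ (n + 1)) := by
  obtain ⟨m, y, hm, hy⟩ := hleft
  set N := m + n with hNdef
  -- a^N = a^(N+1) * x
  have hN1 : a ^ N = a ^ (N + 1) * x := by
    calc a ^ N = a ^ m * a ^ n := by rw [pow_add]
      _ = a ^ m * (a ^ (n + 1) * x) := by rw [← hx]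
      _ = (a ^ m * a ^ (n + 1)) * x := by rw [mul_assoc]
      _ = a ^ (N + 1) * x := by rw [← pow_add, show m + (n + 1) = N + 1 by omega]
  -- a^N = y * a^(N+1)
  have hN2 : a ^ N = y * a ^ (N + 1) := by
    calc a ^ N = a ^ m * a ^ n := by rw [pow_add]
      _ = (y * a ^ (m + 1)) * a ^ n := by rw [← hy]
      _ = y * (a ^ (m + 1) * a ^ n) := by rw [mul_assoc]
      _ = y * a ^ (N + 1) := by rw [← pow_add, show m + 1 + n = N + 1 by omega]
  -- a^N * x = y * a^N
  have hC : a ^ N * x = y * a ^ N := by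
    calc a ^ N * x = (y * a ^ (N + 1)) * x := by rw [← hN2]
      _ = y * (a ^ (N + 1) * x) := by rw [mul_assoc]
      _ = y * a ^ N := by rw [← hN1]
  -- ∀ k, a^N * x^k = y^k * a^N
  have hK : ∀ k, a ^ N * x ^ k = y ^ k * a ^ N := by
    intro k
    induction k with
    | zero => simp
    | succ k ih =>
      calc a ^ N * x ^ (k + 1) = (a ^ N * x ^ k) * x := by rw [pow_succ, mul_assoc]
        _ = y ^ k * (a ^ N * x) := by rw [ih, mul_assoc]
        _ = y ^ k * (y * a ^ N) := by rw [hC]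
        _ = y ^ (k + 1) * a ^ N := by rw [pow_succ, mul_assoc]
  -- a^n = a^N * x^m
  have hAn : a ^ n = a ^ N * x ^ m := by
    have := auxA a x n hx m
    rwa [show n + m = N by omega] at this
  -- a * w = y^N * a^N
  have haw : a * (a ^ n * x ^ (n + 1)) = y ^ N * a ^ N := by
    calc a * (a ^ n * x ^ (n + 1)) = (a * a ^ n) * x ^ (n + 1) := by rw [mul_assoc]
      _ = a ^ (n + 1) * x ^ (n + 1) := by rw [← pow_succ']
      _ = (a ^ (n + 1) * x) * x ^ n := by rw [mul_assoc, ← pow_succ']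
      _ = a ^ n * x ^ n := by rw [← hx]
      _ = a ^ N * (x ^ m * x ^ n) := by rw [hAn]; simp [mul_assoc]
      _ = a ^ N * x ^ N := by rw [← pow_add]
      _ = y ^ N * a ^ N := hK N
  -- w * a = y^N * a^N
  have hwa : (a ^ n * x ^ (n + 1)) * a = y ^ N * a ^ N := by
    calc (a ^ n * x ^ (n + 1)) * a = (a ^ N * (x ^ m * x ^ (n + 1))) * a := by
          rw [hAn]; simp [mul_assoc]
      _ = (a ^ N * x ^ (N + 1)) * a := by rw [← pow_add, show m + (n + 1) = N + 1 by omega]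
      _ = (y ^ (N + 1) * a ^ N) * a := by rw [hK (N + 1)]
      _ = y ^ (N + 1) * a ^ (N + 1) := by rw [mul_assoc, ← pow_succ]
      _ = y ^ N * (y * a ^ (N + 1)) := by rw [pow_succ, mul_assoc]
      _ = y ^ N * a ^ N := by rw [← hN2]
  refine ⟨haw.trans hwa.symm, ?_⟩
  -- a^(n+1) * (a^n * x^(n+1)) = a^(2n+1) * x^(n+1) = a^n
  have := auxA a x n hx (n + 1)
  calc a ^ n = a ^ (n + (n + 1)) * x ^ (n + 1) := this
    _ = (a ^ (n + 1) * a ^ n) * x ^ (n + 1) := by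
        rw [show n + (n + 1) = (n + 1) + n by omega, pow_add]
    _ = a ^ (n + 1) * (a ^ n * x ^ (n + 1)) := by rw [mul_assoc]
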